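/- arXiv:math/0308161 — 5 statements merged into one kernel-verified Lean document; each statement's English description precedes it below -/
import Mathlib

section
/- Let P and Q be orthogonal projections on a complex Hilbert space H, and let H₁ be the orthogonal complement of (ran P ∩ ker Q) ⊕ (ker P ∩ ran Q). Then there exists a bounded operator U on H which is a self-adjoint unitary (U = U* and U² = 1), which lies in the double centralizer of {P, Q, 1} inside the ring of bounded operators on H, such that U x = x for every x in the orthogonal complement of H₁, U maps H₁ into H₁, and U((P − Q)(U x)) = (Q − P) x for every x ∈ H₁. -/
open MeasureTheory

local notation "⟪" x ", " y "⟫" => @inner ℂ _ _ x y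

/-- If `b` commutes with a selfadjoint `a`, it commutes with any continuous function of `a`. -/
private lemma commute_cfc_aux {H : Type*} [NormedAddCommGroup H] [InnerProductSpace ℂ H]
    [CompleteSpace H] (a b : H →L[ℂ] H) (ha : IsSelfAdjoint a) (hab : b * a = a * b)
    (f : ℝ → ℝ) (hf : ContinuousOn f (spectrum ℝ a)) :
    b * cfc f a = cfc f a * b := by
  have key : ∀ g : C(spectrum ℝ a, ℝ), b * cfcHom ha g = cfcHom ha g * b := by
    intro g
    let S : Subalgebra ℝ C(spectrum ℝ a, ℝ) :=
      (Subalgebra.centralizer ℝ {b}).comap ((cfcHom ha (R := ℝ)).toAlgHom)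
    have hSmem : ∀ h : C(spectrum ℝ a, ℝ), h ∈ S ↔ b * cfcHom ha h = cfcHom ha h * b := by
      intro h
      simp [S, Subalgebra.mem_comap, Subalgebra.mem_centralizer_iff]
    have hclosed : IsClosed (S : Set C(spectrum ℝ a, ℝ)) := by
      have : (S : Set C(spectrum ℝ a, ℝ)) =
          ⇑(cfcHom ha (R := ℝ)) ⁻¹' {x | b * x = x * b} := by
        ext h
        simpa using hSmem h
      rw [this]
      exact (isClosed_eq (continuous_const.mul continuous_id)
        (continuous_id.mul continuous_const)).preimage (cfcHom_isClosedEmbedding ha).continuous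
    have hpoly : polynomialFunctions (spectrum ℝ a) ≤ S := by
      rw [polynomialFunctions.eq_adjoin_X]
      apply Algebra.adjoin_le
      rintro g hg
      simp only [Set.mem_singleton_iff] at hg
      subst hg
      rw [SetLike.mem_coe, hSmem]
      have hX : (Polynomial.toContinuousMapOnAlgHom (spectrum ℝ a)) Polynomial.X
          = ContinuousMap.restrict (spectrum ℝ a) (ContinuousMap.id ℝ) := by
        ext x
        simp [Polynomial.toContinuousMapOn, Polynomial.toContinuousMap]
      rw [hX, cfcHom_id ha]
      exact hab
    have htop : S = ⊤ := by
      have := Subalgebra.topologicalClosure_minimal hpoly hclosed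
      rw [polynomialFunctions.topologicalClosure] at this
      exact top_le_iff.mp this
    have : g ∈ S := htop ▸ Algebra.mem_top
    exact (hSmem g).mp this
  by_cases hf' : ContinuousOn f (spectrum ℝ a)
  · rw [cfc_apply f a ha hf']
    exact key _
  · exact absurd hf hf'

example : True := trivial

set_option maxHeartbeats 1000000 in
/-- For orthogonal projections `P`, `Q` on a complex Hilbert space `H`, with
`H₁` the orthogonal complement of `(ran P ∩ ker Q) ⊕ (ker P ∩ ran Q)`, there is a self-adjoint
unitary `U` in the double commutant of `{P, Q, 1}` which is the identity on `H₁ᗮ`, maps `H₁`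
into `H₁`, and satisfies `U (P - Q) U = Q - P` on `H₁`. -/
theorem statement1 {H : Type*} [NormedAddCommGroup H] [InnerProductSpace ℂ H] [CompleteSpace H]
    (P Q : H →L[ℂ] H) (hP : IsSelfAdjoint P) (hP2 : P * P = P)
    (hQ : IsSelfAdjoint Q) (hQ2 : Q * Q = Q) :
    ∀ (A B H₁ : Submodule ℂ H),
      A = LinearMap.range (P : H →ₗ[ℂ] H) ⊓ LinearMap.ker (Q : H →ₗ[ℂ] H) →
      B = LinearMap.ker (P : H →ₗ[ℂ] H) ⊓ LinearMap.range (Q : H →ₗ[ℂ] H) →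
      H₁ = (A ⊔ B)ᗮ →
      ∃ U : H →L[ℂ] H,
        IsSelfAdjoint U ∧ U * U = 1 ∧
        (∀ W : H →L[ℂ] H,
          (W * P = P * W ∧ W * Q = Q * W ∧ W * 1 = 1 * W) → W * U = U * W) ∧
        (∀ x ∈ H₁ᗮ, U x = x) ∧
        (∀ x ∈ H₁, U x ∈ H₁) ∧
        (∀ x ∈ H₁, U ((P - Q) (U x)) = (Q - P) x) := by
  intro A B H₁ hA hB hH₁
  -- inner product lemma for selfadjoint operators
  have isa : ∀ (T : H →L[ℂ] H), IsSelfAdjoint T → ∀ x y : H, ⟪T x, y⟫ = ⟪x, T y⟫ := by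
    intro T hT x y
    conv_lhs => rw [← hT.adjoint_eq]
    exact ContinuousLinearMap.adjoint_inner_left T y x
  obtain ⟨Ao, hAo_def⟩ : ∃ X : H →L[ℂ] H, X = P - Q := ⟨_, rfl⟩
  obtain ⟨Bo, hBo_def⟩ : ∃ X : H →L[ℂ] H, X = 1 - P - Q := ⟨_, rfl⟩
  have hAsa : IsSelfAdjoint Ao := by rw [hAo_def]; exact hP.sub hQ
  have hBsa : IsSelfAdjoint Bo := by rw [hBo_def]; exact ((IsSelfAdjoint.one _).sub hP).sub hQ
  obtain ⟨T, hT_def⟩ : ∃ X : H →L[ℂ] H, X = Bo * Bo := ⟨_, rfl⟩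
  have hTsa : IsSelfAdjoint T := by
    rw [hT_def, IsSelfAdjoint, star_mul, hBsa.star_eq]
  -- anticommutation
  have hAB : Ao * Bo = -(Bo * Ao) := by
    rw [hAo_def, hBo_def]
    noncomm_ring
    rw [hP2, hQ2]
    abel
  have hBT : Bo * T = T * Bo := by rw [hT_def, mul_assoc]
  have hAT : Ao * T = T * Ao := by
    rw [hT_def, ← mul_assoc, hAB, neg_mul, mul_assoc, hAB, mul_neg, neg_neg, mul_assoc]
  -- square root
  obtain ⟨R, hR_def⟩ : ∃ X : H →L[ℂ] H, X = cfc Real.sqrt T := ⟨_, rfl⟩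
  have hRsa : IsSelfAdjoint R := by rw [hR_def]; exact cfc_predicate _ _
  have hspec : ∀ t ∈ spectrum ℝ T, 0 ≤ t := by
    have hT_eq : T = cfc (fun t : ℝ => t * t) Bo := by
      rw [cfc_mul (fun t : ℝ => t) (fun t : ℝ => t) Bo (by fun_prop) (by fun_prop), cfc_id' ℝ Bo hBsa, hT_def]
    intro t ht
    rw [hT_eq, cfc_map_spectrum (fun t : ℝ => t * t) Bo hBsa (by fun_prop)] at ht
    obtain ⟨s, -, rfl⟩ := ht
    exact mul_self_nonneg s
  have hR2 : R * R = T := by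
    rw [hR_def]
    rw [← cfc_mul Real.sqrt Real.sqrt T Real.continuous_sqrt.continuousOn
      Real.continuous_sqrt.continuousOn]
    rw [cfc_congr (g := fun t : ℝ => t) (fun t ht => Real.mul_self_sqrt (hspec t ht))]
    exact cfc_id' ℝ T hTsa
  have hBR : Bo * R = R * Bo := by rw [hR_def]; exact commute_cfc_aux T Bo hTsa hBT _ Real.continuous_sqrt.continuousOn
  have hAR : Ao * R = R * Ao := by rw [hR_def]; exact commute_cfc_aux T Ao hTsa hAT _ Real.continuous_sqrt.continuousOn
  obtain ⟨N, hN_def⟩ : ∃ X : H →L[ℂ] H, X = R - Bo := ⟨_, rfl⟩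
  obtain ⟨N', hN'_def⟩ : ∃ X : H →L[ℂ] H, X = R + Bo := ⟨_, rfl⟩
  have hNsa : IsSelfAdjoint N := by rw [hN_def]; exact hRsa.sub hBsa
  have hN'sa : IsSelfAdjoint N' := by rw [hN'_def]; exact hRsa.add hBsa
  have hNN' : N * N' = 0 := by
    rw [hN_def, hN'_def, sub_mul, mul_add, mul_add, hR2, ← hBR, hT_def]
    abel
  have hAN : Ao * N = N' * Ao := by
    rw [hN_def, hN'_def, mul_sub, add_mul, hAR, hAB]
    abel
  have hAN' : Ao * N' = N * Ao := by
    calc Ao * N' = Ao * R + Ao * Bo := by rw [hN'_def, mul_add]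
    _ = R * Ao + -(Bo * Ao) := by rw [hAR, hAB]
    _ = (R - Bo) * Ao := by rw [sub_mul]; abel
    _ = N * Ao := by rw [hN_def]
  have hNN'R : N + N' = R + R := by rw [hN_def, hN'_def]; abel
  have hN'N : N' * N = 0 := by
    rw [hN_def, hN'_def, add_mul, mul_sub, mul_sub, hR2, hBR, hT_def]
    abel
  -- kernel facts
  have hkerTN : ∀ x : H, T x = 0 → R x = 0 := by
    intro x hx
    have hRRx : R (R x) = T x := by rw [← hR2]; rfl
    have : ⟪R x, R x⟫ = 0 := by
      rw [isa R hRsa x (R x), hRRx, hx, inner_zero_right]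
    exact inner_self_eq_zero.mp this
  have hkerBR : ∀ x : H, Bo x = 0 → R x = 0 := by
    intro x hx
    apply hkerTN
    have : T x = Bo (Bo x) := by rw [hT_def]; rfl
    rw [this, hx, map_zero]
  have hkerRB : ∀ x : H, R x = 0 → Bo x = 0 := by
    intro x hx
    have hTx : T x = 0 := by
      have : T x = R (R x) := by rw [← hR2]; rfl
      rw [this, hx, map_zero]
    have hBBx : Bo (Bo x) = T x := by rw [hT_def]; rfl
    have : ⟪Bo x, Bo x⟫ = 0 := by
      rw [isa Bo hBsa x (Bo x), hBBx, hTx, inner_zero_right]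
    exact inner_self_eq_zero.mp this
  have hkerBN : ∀ x : H, Bo x = 0 → N x = 0 := by
    intro x hx
    rw [hN_def]
    simp [ContinuousLinearMap.sub_apply, hkerBR x hx, hx]
  have hkerBN' : ∀ x : H, Bo x = 0 → N' x = 0 := by
    intro x hx
    rw [hN'_def]
    simp [ContinuousLinearMap.add_apply, hkerBR x hx, hx]
  -- idempotents: ranges are fixed points
  have hfixP : ∀ x : H, x ∈ LinearMap.range (P : H →ₗ[ℂ] H) ↔ P x = x := by
    intro x
    constructor
    · rintro ⟨y, rfl⟩
      have : P (P y) = (P * P) y := rfl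
      rw [show (P : H →ₗ[ℂ] H) y = P y from rfl, this, hP2]
    · intro h
      exact ⟨x, h⟩
  have hfixQ : ∀ x : H, x ∈ LinearMap.range (Q : H →ₗ[ℂ] H) ↔ Q x = x := by
    intro x
    constructor
    · rintro ⟨y, rfl⟩
      have : Q (Q y) = (Q * Q) y := rfl
      rw [show (Q : H →ₗ[ℂ] H) y = Q y from rfl, this, hQ2]
    · intro h
      exact ⟨x, h⟩
  -- kernel of Bo is A ⊔ B
  have hBo_apply : ∀ x : H, Bo x = x - P x - Q x := by
    intro x
    rw [hBo_def]
    simp [ContinuousLinearMap.sub_apply, ContinuousLinearMap.one_apply]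
  have hkerB_iff : ∀ x : H, Bo x = 0 ↔ x ∈ A ⊔ B := by
    intro x
    constructor
    · intro hx
      rw [hBo_apply] at hx
      have hxPQ : P x + Q x = x := by
        rw [sub_sub, sub_eq_zero] at hx
        exact hx.symm
      have hPP : P (P x) = P x := by
        have : P (P x) = (P * P) x := rfl
        rw [this, hP2]
      have hQQ : Q (Q x) = Q x := by
        have : Q (Q x) = (Q * Q) x := rfl
        rw [this, hQ2]
      have hPQx : P (Q x) = 0 := by
        have h1 : P (P x) + P (Q x) = P x := by rw [← map_add, hxPQ]
        rw [hPP] at h1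
        exact add_eq_left.mp h1
      have hQPx : Q (P x) = 0 := by
        have h1 : Q (P x) + Q (Q x) = Q x := by rw [← map_add, hxPQ]
        rw [hQQ] at h1
        exact add_eq_right.mp h1
      refine Submodule.mem_sup.mpr ⟨P x, ?_, Q x, ?_, hxPQ⟩
      · rw [hA, Submodule.mem_inf]
        exact ⟨⟨x, rfl⟩, LinearMap.mem_ker.mpr hQPx⟩
      · rw [hB, Submodule.mem_inf]
        exact ⟨LinearMap.mem_ker.mpr hPQx, ⟨x, rfl⟩⟩
    · intro hx
      obtain ⟨a, ha', b, hb', rfl⟩ := Submodule.mem_sup.mp hx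
      rw [hA, Submodule.mem_inf] at ha'
      rw [hB, Submodule.mem_inf] at hb'
      have hPa : P a = a := (hfixP a).mp ha'.1
      have hQa : Q a = 0 := LinearMap.mem_ker.mp ha'.2
      have hPb : P b = 0 := LinearMap.mem_ker.mp hb'.1
      have hQb : Q b = b := (hfixQ b).mp hb'.2
      rw [hBo_apply]
      rw [map_add, map_add, hPa, hQa, hPb, hQb]
      abel
  have hkerB_eq : LinearMap.ker (Bo : H →ₗ[ℂ] H) = A ⊔ B := by
    ext x
    rw [LinearMap.mem_ker]
    exact hkerB_iff x
  have hH₁' : H₁ = (LinearMap.ker (Bo : H →ₗ[ℂ] H))ᗮ := by rw [hH₁, hkerB_eq]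
  haveI : CompleteSpace (LinearMap.ker (Bo : H →ₗ[ℂ] H) : Submodule ℂ H) :=
    (ContinuousLinearMap.isClosed_ker Bo).completeSpace_coe
  have hH₁orth : H₁ᗮ = (LinearMap.ker (Bo : H →ₗ[ℂ] H) : Submodule ℂ H) := by
    rw [hH₁', Submodule.orthogonal_orthogonal]
  -- generic orthogonality helper
  have horth : ∀ (V : H →L[ℂ] H) (x : H), (∀ z : H, ⟪V z, x⟫ = 0) →
      ∀ u ∈ (LinearMap.range (V : H →ₗ[ℂ] H)).topologicalClosure, ⟪u, x⟫ = 0 := by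
    intro V x hx u hu
    have hxmem : x ∈ (LinearMap.range (V : H →ₗ[ℂ] H))ᗮ := by
      rw [Submodule.mem_orthogonal]
      rintro w ⟨z, rfl⟩
      exact hx z
    have hu' : u ∈ (LinearMap.range (V : H →ₗ[ℂ] H))ᗮᗮ :=
      Submodule.topologicalClosure_minimal _ (Submodule.le_orthogonal_orthogonal _)
        (Submodule.isClosed_orthogonal _) hu
    exact inner_eq_zero_symm.mp ((Submodule.mem_orthogonal _ u).mp hu' x hxmem)
  obtain ⟨K, hK_def⟩ : ∃ X : Submodule ℂ H, X = (LinearMap.range (N : H →ₗ[ℂ] H)).topologicalClosure := ⟨_, rfl⟩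
  obtain ⟨K', hK'_def⟩ : ∃ X : Submodule ℂ H, X = (LinearMap.range (N' : H →ₗ[ℂ] H)).topologicalClosure :=
    ⟨_, rfl⟩
  have hKclosed : IsClosed (K : Set H) := by
    rw [hK_def]; exact (LinearMap.range (N : H →ₗ[ℂ] H)).isClosed_topologicalClosure
  have hK'closed : IsClosed (K' : Set H) := by
    rw [hK'_def]; exact (LinearMap.range (N' : H →ₗ[ℂ] H)).isClosed_topologicalClosure
  haveI : CompleteSpace K := hKclosed.completeSpace_coe
  haveI : CompleteSpace K' := hK'closed.completeSpace_coe
  have hranNK : ∀ z : H, N z ∈ K := by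
    intro z; rw [hK_def]; exact (LinearMap.range (N : H →ₗ[ℂ] H)).le_topologicalClosure ⟨z, rfl⟩
  have hranN'K' : ∀ z : H, N' z ∈ K' := by
    intro z; rw [hK'_def]; exact (LinearMap.range (N' : H →ₗ[ℂ] H)).le_topologicalClosure ⟨z, rfl⟩
  have hK_perp_ker : ∀ x : H, Bo x = 0 → ∀ u ∈ K, ⟪u, x⟫ = 0 := by
    intro x hx u hu
    rw [hK_def] at hu
    exact horth N x (fun z => by rw [isa N hNsa z x, hkerBN x hx, inner_zero_right]) u hu
  have hK'_perp_ker : ∀ x : H, Bo x = 0 → ∀ u ∈ K', ⟪u, x⟫ = 0 := by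
    intro x hx u hu
    rw [hK'_def] at hu
    exact horth N' x (fun z => by rw [isa N' hN'sa z x, hkerBN' x hx, inner_zero_right]) u hu
  have hKK' : ∀ u ∈ K, ∀ v ∈ K', ⟪u, v⟫ = 0 := by
    intro u hu v hv
    rw [hK_def] at hu
    rw [hK'_def] at hv
    have h1 : ∀ z : H, ⟪u, N' z⟫ = 0 := by
      intro z
      have hw : ∀ w : H, ⟪N w, N' z⟫ = 0 := by
        intro w
        have hNN'z : N (N' z) = 0 := by
          have h0 : N (N' z) = (N * N') z := rfl
          rw [h0, hNN']
          rfl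
        rw [isa N hNsa w (N' z), hNN'z, inner_zero_right]
      exact horth N (N' z) hw u hu
    have h2 : ∀ z : H, ⟪N' z, u⟫ = 0 := fun z => inner_eq_zero_symm.mp (h1 z)
    exact inner_eq_zero_symm.mp (horth N' u h2 v hv)
  have hKH₁ : ∀ u ∈ K, u ∈ (LinearMap.ker (Bo : H →ₗ[ℂ] H) : Submodule ℂ H)ᗮ := by
    intro u hu
    rw [Submodule.mem_orthogonal]
    intro w hw
    exact inner_eq_zero_symm.mp (hK_perp_ker w (LinearMap.mem_ker.mp hw) u hu)
  have hK'H₁ : ∀ u ∈ K', u ∈ (LinearMap.ker (Bo : H →ₗ[ℂ] H) : Submodule ℂ H)ᗮ := by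
    intro u hu
    rw [Submodule.mem_orthogonal]
    intro w hw
    exact inner_eq_zero_symm.mp (hK'_perp_ker w (LinearMap.mem_ker.mp hw) u hu)
  -- operators map closures of ranges where they should
  have hmaps : ∀ (S : Submodule ℂ H), IsClosed (S : Set H) → ∀ (V W' : H →L[ℂ] H),
      (∀ z : H, W' (V z) ∈ S) → ∀ x ∈ (LinearMap.range (V : H →ₗ[ℂ] H)).topologicalClosure, W' x ∈ S := by
    intro S hS V W' h x hx
    have hle : LinearMap.range (V : H →ₗ[ℂ] H) ≤ S.comap (W' : H →ₗ[ℂ] H) := by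
      rintro w ⟨z, rfl⟩
      exact Submodule.mem_comap.mpr (h z)
    have hcl : IsClosed ((S.comap (W' : H →ₗ[ℂ] H) : Submodule ℂ H) : Set H) := hS.preimage W'.continuous
    exact Submodule.mem_comap.mp (Submodule.topologicalClosure_minimal _ hle hcl hx)
  have hAmapsK : ∀ x ∈ K, Ao x ∈ K' := by
    intro x hx
    rw [hK_def] at hx
    refine hmaps K' hK'closed N Ao ?_ x hx
    intro z
    have h0 : Ao (N z) = N' (Ao z) := by
      have h1 : Ao (N z) = (Ao * N) z := rfl
      rw [h1, hAN]
      rfl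
    rw [h0]
    exact hranN'K' _
  have hAmapsK' : ∀ x ∈ K', Ao x ∈ K := by
    intro x hx
    rw [hK'_def] at hx
    refine hmaps K hKclosed N' Ao ?_ x hx
    intro z
    have h0 : Ao (N' z) = N (Ao z) := by
      have h1 : Ao (N' z) = (Ao * N') z := rfl
      rw [h1, hAN']
      rfl
    rw [h0]
    exact hranNK _
  -- the projections
  obtain ⟨E, hE_def⟩ : ∃ X : H →L[ℂ] H, X = K.subtypeL.comp K.orthogonalProjectionOnto := ⟨_, rfl⟩
  obtain ⟨E', hE'_def⟩ : ∃ X : H →L[ℂ] H, X = K'.subtypeL.comp K'.orthogonalProjectionOnto :=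
    ⟨_, rfl⟩
  have hEsa : IsSelfAdjoint E := by rw [hE_def]; exact isSelfAdjoint_starProjection K
  have hE'sa : IsSelfAdjoint E' := by rw [hE'_def]; exact isSelfAdjoint_starProjection K'
  have hE_mem : ∀ x : H, E x ∈ K := by
    intro x; rw [hE_def]; exact (K.orthogonalProjectionOnto x).2
  have hE'_mem : ∀ x : H, E' x ∈ K' := by
    intro x; rw [hE'_def]; exact (K'.orthogonalProjectionOnto x).2
  have hE_id : ∀ x ∈ K, E x = x := by
    intro x hx; rw [hE_def]; exact Submodule.starProjection_eq_self_iff.mpr hx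
  have hE_sub : ∀ x : H, x - E x ∈ Kᗮ := by
    intro x; rw [hE_def]; exact Submodule.sub_starProjection_mem_orthogonal x
  have hE'_sub : ∀ x : H, x - E' x ∈ K'ᗮ := by
    intro x; rw [hE'_def]; exact Submodule.sub_starProjection_mem_orthogonal x
  have hE_zero : ∀ x ∈ Kᗮ, E x = 0 := by
    intro x hx
    simp [hE_def, Submodule.orthogonalProjectionOnto_apply_of_mem_orthogonal hx]
  -- the unitary
  obtain ⟨U, hU_def⟩ : ∃ X : H →L[ℂ] H, X = 1 - (E + E) := ⟨_, rfl⟩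
  have hU_apply : ∀ x : H, U x = x - (E x + E x) := by
    intro x
    rw [hU_def]
    simp [ContinuousLinearMap.sub_apply, ContinuousLinearMap.add_apply,
      ContinuousLinearMap.one_apply]
  have hUsa : IsSelfAdjoint U := by
    rw [hU_def]; exact (IsSelfAdjoint.one _).sub (hEsa.add hEsa)
  have hE2 : E * E = E := by
    ext x
    have h0 : (E * E) x = E (E x) := rfl
    rw [h0, hE_id (E x) (hE_mem x)]
  have hU2 : U * U = 1 := by
    rw [hU_def]
    simp only [sub_mul, mul_sub, one_mul, mul_one, add_mul, mul_add, hE2]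
    abel
  have hUfix : ∀ x : H, Bo x = 0 → U x = x := by
    intro x hx
    have hEx : E x = 0 := by
      apply hE_zero
      rw [Submodule.mem_orthogonal]
      exact hK_perp_ker x hx
    rw [hU_apply, hEx]
    simp
  refine ⟨U, hUsa, hU2, ?_, ?_, ?_, ?_⟩
  · -- double commutant
    rintro W ⟨hWP, hWQ, -⟩
    have hWB : W * Bo = Bo * W := by
      rw [hBo_def]
      simp only [mul_sub, sub_mul, mul_one, one_mul, hWP, hWQ]
    have hWT : W * T = T * W := by
      rw [hT_def, ← mul_assoc, hWB, mul_assoc, hWB, mul_assoc]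
    have hWR : W * R = R * W := by
      rw [hR_def]; exact commute_cfc_aux T W hTsa hWT _ Real.continuous_sqrt.continuousOn
    have hWN : W * N = N * W := by
      rw [hN_def, mul_sub, sub_mul, hWR, hWB]
    have hWsB : star W * Bo = Bo * star W := by
      have h0 := congrArg star hWB
      rw [star_mul, star_mul, hBsa.star_eq] at h0
      exact h0.symm
    have hWsT : star W * T = T * star W := by
      rw [hT_def, ← mul_assoc, hWsB, mul_assoc, hWsB, mul_assoc]
    have hWsR : star W * R = R * star W := by
      rw [hR_def]; exact commute_cfc_aux T (star W) hTsa hWsT _ Real.continuous_sqrt.continuousOn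
    have hWsN : star W * N = N * star W := by
      rw [hN_def, mul_sub, sub_mul, hWsR, hWsB]
    have hWmapsK : ∀ x ∈ K, W x ∈ K := by
      intro x hx
      rw [hK_def] at hx
      refine hmaps K hKclosed N W ?_ x hx
      intro z
      have h0 : W (N z) = N (W z) := by
        have h1 : W (N z) = (W * N) z := rfl
        rw [h1, hWN]
        rfl
      rw [h0]
      exact hranNK _
    have hWsmapsK : ∀ x ∈ K, (star W) x ∈ K := by
      intro x hx
      rw [hK_def] at hx
      refine hmaps K hKclosed N (star W) ?_ x hx
      intro z
      have h0 : (star W) (N z) = N ((star W) z) := by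
        have h1 : (star W) (N z) = (star W * N) z := rfl
        rw [h1, hWsN]
        rfl
      rw [h0]
      exact hranNK _
    have hWE : ∀ x : H, W (E x) = E (W x) := by
      intro x
      have hsplit : W x = W (E x) + W (x - E x) := by
        rw [← map_add]
        congr 1
        abel
      have h1 : E (W (E x)) = W (E x) := hE_id _ (hWmapsK _ (hE_mem x))
      have h2 : E (W (x - E x)) = 0 := by
        apply hE_zero
        rw [Submodule.mem_orthogonal]
        intro u hu
        have h3 : ⟪u, W (x - E x)⟫ = ⟪(ContinuousLinearMap.adjoint W) u, x - E x⟫ :=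
          (ContinuousLinearMap.adjoint_inner_left W (x - E x) u).symm
        rw [h3]
        have hmem : (ContinuousLinearMap.adjoint W) u ∈ K := by
          have h4 : (ContinuousLinearMap.adjoint W) u = (star W) u := by
            rw [ContinuousLinearMap.star_eq_adjoint]
          rw [h4]
          exact hWsmapsK u hu
        exact ((Submodule.mem_orthogonal _ _).mp (hE_sub x)) _ hmem
      rw [hsplit, map_add, h1, h2, add_zero]
    have hWEop : W * E = E * W := by
      ext x
      show W (E x) = E (W x)
      exact hWE x
    rw [hU_def]
    simp only [mul_sub, sub_mul, mul_one, one_mul, mul_add, add_mul, hWEop]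
  · -- identity on H₁ᗮ
    intro x hx
    rw [hH₁orth, LinearMap.mem_ker] at hx
    exact hUfix x hx
  · -- maps H₁ to H₁
    intro x hx
    rw [hH₁'] at hx ⊢
    rw [Submodule.mem_orthogonal] at hx ⊢
    intro u hu
    calc ⟪u, U x⟫ = ⟪U u, x⟫ := (isa U hUsa u x).symm
    _ = ⟪u, x⟫ := by rw [hUfix u (LinearMap.mem_ker.mp hu)]
    _ = 0 := hx u hu
  · -- the main identity
    intro x hx
    rw [hH₁'] at hx
    obtain ⟨y, hy_def⟩ : ∃ y : H, y = x - E x - E' x := ⟨_, rfl⟩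
    have hyK : ∀ u ∈ K, ⟪u, y⟫ = 0 := by
      intro u hu
      have h1 : ⟪u, x - E x⟫ = 0 := ((Submodule.mem_orthogonal _ _).mp (hE_sub x)) u hu
      have h2 : ⟪u, E' x⟫ = 0 := hKK' u hu _ (hE'_mem x)
      rw [hy_def, show x - E x - E' x = (x - E x) - E' x from rfl, inner_sub_right, h1, h2,
        sub_zero]
    have hyK' : ∀ u ∈ K', ⟪u, y⟫ = 0 := by
      intro u hu
      have h1 : ⟪u, x - E' x⟫ = 0 := ((Submodule.mem_orthogonal _ _).mp (hE'_sub x)) u hu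
      have h2 : ⟪u, E x⟫ = 0 := inner_eq_zero_symm.mp (hKK' _ (hE_mem x) u hu)
      rw [hy_def, show x - E x - E' x = (x - E' x) - E x from by abel, inner_sub_right, h1, h2,
        sub_zero]
    have hRy : R y = 0 := by
      have hz : ∀ z : H, ⟪R z, y⟫ = 0 := by
        intro z
        have hNz : ⟪N z, y⟫ = 0 := hyK (N z) (hranNK z)
        have hN'z : ⟪N' z, y⟫ = 0 := hyK' (N' z) (hranN'K' z)
        have hsum : N z + N' z = R z + R z := by
          have h0 : (N + N') z = (R + R) z := by rw [hNN'R]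
          simpa [ContinuousLinearMap.add_apply] using h0
        have h1 : ⟪R z + R z, y⟫ = 0 := by
          rw [← hsum, inner_add_left, hNz, hN'z, add_zero]
        rw [inner_add_left] at h1
        exact add_self_eq_zero.mp h1
      have h2 : ⟪R y, R y⟫ = 0 := by
        rw [← isa R hRsa (R y) y]
        exact hz (R y)
      exact inner_self_eq_zero.mp h2
    have hBy : Bo y = 0 := hkerRB y hRy
    have hy0 : y = 0 := by
      have hyH₁ : y ∈ (LinearMap.ker (Bo : H →ₗ[ℂ] H) : Submodule ℂ H)ᗮ := by
        rw [hy_def]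
        exact Submodule.sub_mem _ (Submodule.sub_mem _ hx (hKH₁ _ (hE_mem x)))
          (hK'H₁ _ (hE'_mem x))
      have h0 : ⟪y, y⟫ = 0 :=
        ((Submodule.mem_orthogonal _ y).mp hyH₁) y (LinearMap.mem_ker.mpr hBy)
      exact inner_self_eq_zero.mp h0
    have hdec : x = E x + E' x := by
      have h0 : x - (E x + E' x) = 0 := by
        rw [← sub_sub, ← hy_def]
        exact hy0
      have := sub_eq_zero.mp h0
      exact this
    have hAEx : Ao (E x) ∈ K' := hAmapsK _ (hE_mem x)
    have hAE'x : Ao (E' x) ∈ K := hAmapsK' _ (hE'_mem x)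
    have hEAEx : E (Ao (E x)) = 0 := by
      apply hE_zero
      rw [Submodule.mem_orthogonal]
      intro u hu
      exact hKK' u hu _ hAEx
    have hEAE'x : E (Ao (E' x)) = Ao (E' x) := hE_id _ hAE'x
    have hEAx : E (Ao x) = Ao (E' x) := by
      conv_lhs => rw [hdec]
      rw [map_add, map_add, hEAEx, hEAE'x, zero_add]
    have hAUx : Ao (U x) = Ao x - (Ao (E x) + Ao (E x)) := by
      rw [hU_apply, map_sub, map_add]
    have hEAUx : E (Ao (U x)) = Ao (E' x) := by
      rw [hAUx, map_sub, map_add, hEAx, hEAEx]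
      simp
    have hfinal : U (Ao (U x)) = -(Ao x) := by
      rw [hU_apply, hEAUx, hAUx]
      have hsum : Ao (E x) + Ao (E' x) = Ao x := by rw [← map_add, ← hdec]
      rw [← hsum]
      abel
    have hgoal1 : (P - Q) (U x) = Ao (U x) := by rw [hAo_def]
    have hgoal2 : (Q - P) x = -(Ao x) := by
      rw [hAo_def]
      simp [ContinuousLinearMap.sub_apply, ContinuousLinearMap.neg_apply, neg_sub]
    rw [hgoal1, hfinal, hgoal2]
end

section
/- For every real number r ≥ e, the integral ∫_e^r (1/log x) dx is at most 3(r − e)/(2 log r). -/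
open MeasureTheory

lemma key_ineq (x : ℝ) (hx : 0 < x) : x * (3 - Real.log x) ≤ 3 * Real.exp 1 := by
  have h : 3 - Real.log x ≤ Real.exp (2 - Real.log x) := by
    have := Real.add_one_le_exp (2 - Real.log x); linarith
  have h2 : x * (3 - Real.log x) ≤ x * Real.exp (2 - Real.log x) :=
    mul_le_mul_of_nonneg_left h hx.le
  have h3 : x * Real.exp (2 - Real.log x) = Real.exp 1 * Real.exp 1 := by
    rw [Real.exp_sub, Real.exp_log hx]
    rw [show (2:ℝ) = 1 + 1 by norm_num, Real.exp_add]
    field_simp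
  have he : Real.exp 1 < 3 := by
    have := Real.exp_one_lt_d9; linarith
  nlinarith [Real.exp_pos 1]

/-- Lemma A.4: for `r ≥ e`, `∫_e^r dx / log x ≤ 3 (r - e) / (2 log r)`. -/
theorem statement3 (r : ℝ) (hr : Real.exp 1 ≤ r) :
    ∫ x in (Real.exp 1)..r, 1 / Real.log x ≤ 3 * (r - Real.exp 1) / (2 * Real.log r) := by
  set e := Real.exp 1 with he_def
  have he1 : (1:ℝ) < e := by rw [he_def]; have := Real.exp_one_gt_d9; linarith
  have he0 : (0:ℝ) < e := by linarith
  -- facts on points of Icc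
  have hfacts : ∀ x ∈ Set.Icc e r, 0 < x ∧ 1 ≤ Real.log x := by
    intro x hx
    have hx0 : 0 < x := lt_of_lt_of_le he0 hx.1
    refine ⟨hx0, ?_⟩
    have := Real.log_le_log (by positivity) hx.1
    rwa [Real.log_exp] at this
  set F' : ℝ → ℝ := fun x => 3/2 * ((1 * Real.log x - (x - e) * (1/x)) / (Real.log x)^2)
    with hF'
  have hderiv : ∀ x ∈ Set.Icc e r, HasDerivAt (fun y => 3*(y - e)/(2*Real.log y)) (F' x) x := by
    intro x hx
    obtain ⟨hx0, hlog⟩ := hfacts x hx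
    have hlogne : Real.log x ≠ 0 := by linarith
    have h1 : HasDerivAt (fun y : ℝ => y - e) 1 x := (hasDerivAt_id x).sub_const e
    have h2 : HasDerivAt Real.log (1/x) x := by
      simpa [one_div] using Real.hasDerivAt_log hx0.ne'
    have h3 := (h1.div h2 hlogne).const_mul (3/2 : ℝ)
    have hfun : (fun y => 3*(y - e)/(2*Real.log y)) = fun y => 3/2 * ((fun y => y - e) / Real.log) y := by
      funext y; simp only [Pi.div_apply]; ring
    rw [hfun]; exact h3
  have hcontF' : ContinuousOn F' (Set.Icc e r) := by
    intro x hx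
    obtain ⟨hx0, hlog⟩ := hfacts x hx
    have hlogne : Real.log x ≠ 0 := by linarith
    have hca : ContinuousAt F' x := by
      have hclog : ContinuousAt Real.log x := Real.continuousAt_log hx0.ne'
      exact (continuousAt_const.mul
        (((continuousAt_const.mul hclog).sub
          (((continuousAt_id.sub continuousAt_const)).mul
            (continuousAt_const.div continuousAt_id hx0.ne'))).div
          (hclog.pow 2) (pow_ne_zero 2 hlogne)))
    exact hca.continuousWithinAt
  have hcontf : ContinuousOn (fun x => 1 / Real.log x) (Set.Icc e r) := by
    intro x hx
    obtain ⟨hx0, hlog⟩ := hfacts x hx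
    have hlogne : Real.log x ≠ 0 := by linarith
    exact (continuousAt_const.div (Real.continuousAt_log hx0.ne') hlogne).continuousWithinAt
  have huIcc : Set.uIcc e r = Set.Icc e r := Set.uIcc_of_le hr
  have hintF' : IntervalIntegrable F' volume e r := by
    apply ContinuousOn.intervalIntegrable; rwa [huIcc]
  have hintf : IntervalIntegrable (fun x => 1 / Real.log x) volume e r := by
    apply ContinuousOn.intervalIntegrable; rwa [huIcc]
  have hle : ∀ x ∈ Set.Icc e r, 1 / Real.log x ≤ F' x := by
    intro x hx
    obtain ⟨hx0, hlog⟩ := hfacts x hx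
    have hkey : x * (3 - Real.log x) ≤ 3 * e := key_ineq x hx0
    have hlogpos : (0:ℝ) < Real.log x := by linarith
    have hdiff : F' x - 1 / Real.log x
        = (x * Real.log x - 3*x + 3*e) / (2 * x * (Real.log x)^2) := by
      rw [hF']
      field_simp
      ring
    have hnum : 0 ≤ x * Real.log x - 3*x + 3*e := by nlinarith [hkey]
    have : 0 ≤ F' x - 1 / Real.log x := by
      rw [hdiff]; positivity
    linarith
  have hmono := intervalIntegral.integral_mono_on hr hintf hintF' hle
  have heval : ∫ x in e..r, F' x = 3*(r - e)/(2*Real.log r) - 3*(e - e)/(2*Real.log e) := by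
    apply intervalIntegral.integral_eq_sub_of_hasDerivAt
    · intro x hx; exact hderiv x (huIcc ▸ hx)
    · exact hintF'
  rw [heval] at hmono
  simpa using hmono
end

section
/- For every real number r > 0, one has r/log(r + e) ≤ ∫₀^r 1/log(x + e) dx ≤ 3r/(2 log(r + e)). -/
open MeasureTheory

lemma aux_log_ge_one {x : ℝ} (hx : 0 ≤ x) : 1 ≤ Real.log (x + Real.exp 1) := by
  calc (1:ℝ) = Real.log (Real.exp 1) := (Real.log_exp 1).symm
    _ ≤ Real.log (x + Real.exp 1) := Real.log_le_log (Real.exp_pos 1) (by linarith)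

lemma aux_3x {x : ℝ} (hx : 0 ≤ x) :
    3 * x ≤ (x + Real.exp 1) * Real.log (x + Real.exp 1) := by
  have hE : 0 < Real.exp 1 := Real.exp_pos 1
  have htpos : 0 < x + Real.exp 1 := by linarith
  set t := x + Real.exp 1 with ht
  have h1 : Real.log ((Real.exp 1) ^ 2 / t) ≤ (Real.exp 1) ^ 2 / t - 1 :=
    Real.log_le_sub_one_of_pos (by positivity)
  have h2 : Real.log ((Real.exp 1) ^ 2 / t) = 2 - Real.log t := by
    rw [Real.log_div (by positivity) htpos.ne', Real.log_pow, Real.log_exp]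
    ring
  have h3 : 3 - (Real.exp 1) ^ 2 / t ≤ Real.log t := by linarith [h2 ▸ h1]
  have h4 : (Real.exp 1) ^ 2 / t * t = (Real.exp 1) ^ 2 :=
    div_mul_cancel₀ _ htpos.ne'
  have he3 : Real.exp 1 ≤ 3 := by nlinarith [Real.exp_one_lt_d9]
  have hx3 : 3 * x = 3 * t - 3 * Real.exp 1 := by rw [ht]; ring
  have he2 : Real.exp 1 ^ 2 ≤ 3 * Real.exp 1 := by nlinarith
  nlinarith [mul_le_mul_of_nonneg_right h3 htpos.le]

/-- for `r > 0`,
`r / log (r + e) ≤ ∫₀^r dx / log (x + e) ≤ 3 r / (2 log (r + e))`. -/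
theorem statement4 (r : ℝ) (hr : 0 < r) :
    r / Real.log (r + Real.exp 1) ≤ (∫ x in (0:ℝ)..r, 1 / Real.log (x + Real.exp 1)) ∧
    (∫ x in (0:ℝ)..r, 1 / Real.log (x + Real.exp 1)) ≤
      3 * r / (2 * Real.log (r + Real.exp 1)) := by
  have hE : 0 < Real.exp 1 := Real.exp_pos 1
  -- continuity / integrability of the integrand
  have hcont : ContinuousOn (fun x => 1 / Real.log (x + Real.exp 1)) (Set.Icc 0 r) := by
    intro x hx
    have hxpos : 0 < x + Real.exp 1 := by have := hx.1; linarith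
    have hne : Real.log (x + Real.exp 1) ≠ 0 := by
      have := aux_log_ge_one hx.1; linarith
    have hlogca : ContinuousAt (fun y : ℝ => Real.log (y + Real.exp 1)) x :=
      ContinuousAt.log (by fun_prop) hxpos.ne'
    exact (ContinuousAt.continuousWithinAt (continuousAt_const.div hlogca hne))
  have hint : IntervalIntegrable (fun x => 1 / Real.log (x + Real.exp 1))
      volume 0 r := by
    apply hcont.intervalIntegrable_of_Icc hr.le
  -- the derivative of g x = 3x / (2 log (x+e))
  set g' : ℝ → ℝ := fun x =>
    (3 * (2 * Real.log (x + Real.exp 1)) - 3 * x * (2 * (x + Real.exp 1)⁻¹)) /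
      (2 * Real.log (x + Real.exp 1)) ^ 2 with hg'def
  have hderiv : ∀ x ∈ Set.Icc (0:ℝ) r,
      HasDerivAt (fun y => 3 * y / (2 * Real.log (y + Real.exp 1))) (g' x) x := by
    intro x hx
    have hxpos : 0 < x + Real.exp 1 := by have := hx.1; linarith
    have hLne : 2 * Real.log (x + Real.exp 1) ≠ 0 := by
      have := aux_log_ge_one hx.1; positivity
    have hu : HasDerivAt (fun y : ℝ => 3 * y) 3 x := by
      simpa using (hasDerivAt_id x).const_mul (3:ℝ)
    have hlog : HasDerivAt (fun y : ℝ => Real.log (y + Real.exp 1)) (x + Real.exp 1)⁻¹ x := by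
      have := ((hasDerivAt_id x).add_const (Real.exp 1)).log hxpos.ne'
      simpa using this
    have hv : HasDerivAt (fun y : ℝ => 2 * Real.log (y + Real.exp 1))
        (2 * (x + Real.exp 1)⁻¹) x := hlog.const_mul 2
    exact hu.div hv hLne
  have hg'cont : ContinuousOn g' (Set.Icc 0 r) := by
    intro x hx
    have hxpos : 0 < x + Real.exp 1 := by have := hx.1; linarith
    have hLne : (2 * Real.log (x + Real.exp 1)) ^ 2 ≠ 0 := by
      have := aux_log_ge_one hx.1; positivity
    have hlogca : ContinuousAt (fun y : ℝ => Real.log (y + Real.exp 1)) x :=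
      ContinuousAt.log (by fun_prop) hxpos.ne'
    have hinvca : ContinuousAt (fun y : ℝ => (y + Real.exp 1)⁻¹) x :=
      ContinuousAt.inv₀ (f := fun y : ℝ => y + Real.exp 1) (by fun_prop) hxpos.ne'
    have hxca : ContinuousAt (fun y : ℝ => (3:ℝ) * y) x := by fun_prop
    refine ContinuousAt.continuousWithinAt (ContinuousAt.div ?_ ?_ hLne)
    · exact (continuousAt_const.mul (continuousAt_const.mul hlogca)).sub
        (hxca.mul (continuousAt_const.mul hinvca))
    · exact (continuousAt_const.mul hlogca).pow 2
  have hg'int : IntervalIntegrable g' volume 0 r :=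
    hg'cont.intervalIntegrable_of_Icc hr.le
  constructor
  · -- lower bound
    have hmono : ∀ x ∈ Set.Icc (0:ℝ) r,
        1 / Real.log (r + Real.exp 1) ≤ 1 / Real.log (x + Real.exp 1) := by
      intro x hx
      have h1 := aux_log_ge_one hx.1
      have h2 : Real.log (x + Real.exp 1) ≤ Real.log (r + Real.exp 1) :=
        Real.log_le_log (by linarith [hx.1]) (by linarith [hx.2])
      exact one_div_le_one_div_of_le (by linarith) h2
    have := intervalIntegral.integral_mono_on hr.le
      (intervalIntegrable_const (c := 1 / Real.log (r + Real.exp 1))) hint hmono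
    have hconst : (∫ _x in (0:ℝ)..r, 1 / Real.log (r + Real.exp 1))
        = r / Real.log (r + Real.exp 1) := by
      rw [intervalIntegral.integral_const]
      rw [smul_eq_mul]
      ring
    linarith [hconst ▸ this]
  · -- upper bound
    have hptwise : ∀ x ∈ Set.Icc (0:ℝ) r,
        1 / Real.log (x + Real.exp 1) ≤ g' x := by
      intro x hx
      have hxpos : 0 < x + Real.exp 1 := by have := hx.1; linarith
      have hL1 : 1 ≤ Real.log (x + Real.exp 1) := aux_log_ge_one hx.1
      have h3x := aux_3x hx.1
      set L := Real.log (x + Real.exp 1) with hL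
      have hLpos : 0 < L := by linarith
      rw [hg'def]
      rw [div_le_div_iff₀ hLpos (by positivity)]
      have hinv : 3 * x * (x + Real.exp 1)⁻¹ ≤ L := by
        rw [mul_inv_le_iff₀ hxpos]
        nlinarith
      nlinarith [mul_le_mul_of_nonneg_right hinv hLpos.le]
    have hmonoI := intervalIntegral.integral_mono_on hr.le hint hg'int hptwise
    have hftc : (∫ x in (0:ℝ)..r, g' x)
        = 3 * r / (2 * Real.log (r + Real.exp 1)) - 3 * 0 / (2 * Real.log (0 + Real.exp 1)) :=
      intervalIntegral.integral_eq_sub_of_hasDerivAt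
        (fun x hx => hderiv x (by rwa [Set.uIcc_of_le hr.le] at hx)) hg'int
    rw [hftc] at hmonoI
    simpa using hmonoI
end

section
/- Let μ : (0,∞) → ℝ be a nonnegative, antitone and bounded function, and adopt the convention exp(−t/μ(x)) = 0 whenever μ(x) = 0. Then the following are equivalent: (i) there exist constants C > 0 and x₀ > 1 such that μ(x) ≤ C/log x for all x ≥ x₀ (i.e., μ(x) = O(1/log x) as x → ∞); (ii) there exists t₀ > 0 such that for every t > t₀ the integral ∫₀^∞ exp(−t/μ(x)) dx is finite. -/
open MeasureTheory
open scoped ENNReal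

/-- scalar Lemma B.4: for a nonnegative, antitone and bounded
`μ : (0,∞) → ℝ` (with the convention `exp (-t/μ x) = 0` when `μ x = 0`),
`μ x = O(1/log x)` as `x → ∞` iff there is `t₀ > 0` such that for every `t > t₀`
the integral `∫₀^∞ exp (-t / μ x) dx` is finite. -/
theorem statement7 (μ : ℝ → ℝ)
    (h_nonneg : ∀ x ∈ Set.Ioi (0:ℝ), 0 ≤ μ x)
    (h_anti : AntitoneOn μ (Set.Ioi 0))
    (h_bdd : ∃ M : ℝ, ∀ x ∈ Set.Ioi (0:ℝ), μ x ≤ M) :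
    (∃ C > (0:ℝ), ∃ x₀ > (1:ℝ), ∀ x ≥ x₀, μ x ≤ C / Real.log x) ↔
    (∃ t₀ > (0:ℝ), ∀ t > t₀,
      (∫⁻ x in Set.Ioi (0:ℝ),
        ENNReal.ofReal (if μ x = 0 then 0 else Real.exp (-t / μ x))) < ⊤) := by
  constructor
  · rintro ⟨C, hC, x₀, hx₀, hμC⟩
    refine ⟨C, hC, fun t ht => ?_⟩
    have ht0 : 0 < t := lt_trans hC ht
    set f : ℝ → ℝ := fun x => if μ x = 0 then 0 else Real.exp (-t / μ x) with hf
    -- pointwise bounds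
    have hf01 : ∀ x ∈ Set.Ioi (0:ℝ), ENNReal.ofReal (f x) ≤ 1 := by
      intro x hx
      by_cases h : μ x = 0
      · simp [hf, h]
      · have hμpos : 0 < μ x := lt_of_le_of_ne (h_nonneg x hx) (Ne.symm h)
        simp only [hf, h, if_neg]
        rw [show (1:ℝ≥0∞) = ENNReal.ofReal 1 by simp]
        apply ENNReal.ofReal_le_ofReal
        apply Real.exp_le_one_iff.2
        apply div_nonpos_of_nonpos_of_nonneg (by linarith) hμpos.le
    have key : (∫⁻ x in Set.Ioi (0:ℝ), ENNReal.ofReal (f x)) ≤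
        (∫⁻ x in Set.Ioc (0:ℝ) x₀, ENNReal.ofReal (f x)) +
        (∫⁻ x in Set.Ioi x₀, ENNReal.ofReal (f x)) := by
      rw [← lintegral_union measurableSet_Ioi Set.Ioc_disjoint_Ioi_same,
        Set.Ioc_union_Ioi_eq_Ioi (by linarith : (0:ℝ) ≤ x₀)]
    have h1 : (∫⁻ x in Set.Ioc (0:ℝ) x₀, ENNReal.ofReal (f x)) < ⊤ := by
      calc (∫⁻ x in Set.Ioc (0:ℝ) x₀, ENNReal.ofReal (f x))
          ≤ ∫⁻ _ in Set.Ioc (0:ℝ) x₀, 1 := by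
            apply setLIntegral_mono' measurableSet_Ioc
            intro x hx
            exact hf01 x hx.1
        _ = volume (Set.Ioc (0:ℝ) x₀) := by rw [setLIntegral_one]
        _ < ⊤ := by simp [Real.volume_Ioc]
    have h2 : (∫⁻ x in Set.Ioi x₀, ENNReal.ofReal (f x)) < ⊤ := by
      have hint : IntegrableOn (fun x : ℝ => x ^ (-(t/C))) (Set.Ioi x₀) := by
        apply integrableOn_Ioi_rpow_of_lt _ (by linarith : (0:ℝ) < x₀)
        rw [neg_lt, neg_neg]
        exact (one_lt_div hC).2 ht
      have hb : ∀ x ∈ Set.Ioi x₀, ENNReal.ofReal (f x) ≤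
          ENNReal.ofReal (x ^ (-(t/C))) := by
        intro x hx
        have hx1 : (1:ℝ) < x := lt_trans hx₀ hx
        have hlog : 0 < Real.log x := Real.log_pos hx1
        by_cases h : μ x = 0
        · simp only [hf, h, if_pos]
          simp
        · have hxx0 : x₀ < x := hx
          have hμpos : 0 < μ x := lt_of_le_of_ne (h_nonneg x (Set.mem_Ioi.2 (by linarith))) (Ne.symm h)
          simp only [hf, h, if_neg]
          apply ENNReal.ofReal_le_ofReal
          rw [Real.rpow_def_of_pos (by linarith : (0:ℝ) < x)]
          apply Real.exp_le_exp.2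
          have hμle : μ x ≤ C / Real.log x := hμC x hxx0.le
          have h3 : t * Real.log x / C ≤ t / μ x := by
            calc t * Real.log x / C = t / (C / Real.log x) := by
                  field_simp
              _ ≤ t / μ x := div_le_div_of_nonneg_left ht0.le hμpos hμle
          have h5 : Real.log x * -(t / C) = -(t * Real.log x / C) := by ring
          rw [h5, neg_div]
          exact neg_le_neg h3
      calc (∫⁻ x in Set.Ioi x₀, ENNReal.ofReal (f x))
          ≤ ∫⁻ x in Set.Ioi x₀, ENNReal.ofReal (x ^ (-(t/C))) := by
            apply setLIntegral_mono' measurableSet_Ioi hb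
        _ < ⊤ := by
            rw [← hasFiniteIntegral_iff_ofReal]
            · exact hint.hasFiniteIntegral
            · filter_upwards [ae_restrict_mem measurableSet_Ioi] with x hx
              have hx0 : (0:ℝ) < x := lt_trans (by linarith) hx
              positivity
    exact lt_of_le_of_lt key (ENNReal.add_lt_top.2 ⟨h1, h2⟩)
  · rintro ⟨t₀, ht₀, hfin⟩
    set t : ℝ := t₀ + 1 with htdef
    have ht : t₀ < t := by simp [htdef]
    have ht0 : 0 < t := by linarith
    set f : ℝ → ℝ := fun x => if μ x = 0 then 0 else Real.exp (-t / μ x) with hf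
    have hJ := hfin t ht
    set J : ENNReal := ∫⁻ x in Set.Ioi (0:ℝ), ENNReal.ofReal (f x) with hJdef
    set K : ℝ := J.toReal with hK
    have hK0 : 0 ≤ K := ENNReal.toReal_nonneg
    have hf_nonneg : ∀ x, 0 ≤ f x := by
      intro x
      by_cases h : μ x = 0 <;> simp [hf, h, Real.exp_nonneg]
    -- antitonicity of f
    have hf_anti : ∀ x ∈ Set.Ioi (0:ℝ), ∀ y ∈ Set.Ioi (0:ℝ), y ≤ x → f x ≤ f y := by
      intro x hx y hy hyx
      by_cases h : μ x = 0
      · simp only [hf, h, if_pos]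
        exact hf_nonneg y
      · have hμx : 0 < μ x := lt_of_le_of_ne (h_nonneg x hx) (Ne.symm h)
        have hμyx : μ x ≤ μ y := h_anti hy hx hyx
        have hμy : 0 < μ y := lt_of_lt_of_le hμx hμyx
        simp only [hf, h, if_neg, hμy.ne', if_neg]
        apply Real.exp_le_exp.2
        rw [neg_div, neg_div, neg_le_neg_iff]
        exact div_le_div_of_nonneg_left ht0.le hμx hμyx
    -- key bound: f x * x ≤ K for x > 0
    have hbound : ∀ x ∈ Set.Ioi (0:ℝ), f x * x ≤ K := by
      intro x hx
      have hx0 : (0:ℝ) < x := hx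
      have step : ENNReal.ofReal (f x) * volume (Set.Ioc (0:ℝ) x) ≤ J := by
        calc ENNReal.ofReal (f x) * volume (Set.Ioc (0:ℝ) x)
            = ∫⁻ _ in Set.Ioc (0:ℝ) x, ENNReal.ofReal (f x) := by
              rw [setLIntegral_const]
          _ = ∫⁻ y, (Set.Ioc (0:ℝ) x).indicator (fun _ => ENNReal.ofReal (f x)) y := by
              rw [lintegral_indicator measurableSet_Ioc]
          _ ≤ ∫⁻ y, (Set.Ioc (0:ℝ) x).indicator (fun y => ENNReal.ofReal (f y)) y := by
              apply lintegral_mono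
              intro y
              by_cases hy : y ∈ Set.Ioc (0:ℝ) x
              · simp only [Set.indicator_of_mem hy]
                exact ENNReal.ofReal_le_ofReal (hf_anti x hx y hy.1 hy.2)
              · simp [Set.indicator_of_notMem hy]
          _ = ∫⁻ y in Set.Ioc (0:ℝ) x, ENNReal.ofReal (f y) := by
              rw [lintegral_indicator measurableSet_Ioc]
          _ ≤ J := by
              rw [hJdef]
              exact lintegral_mono_set Set.Ioc_subset_Ioi_self
      rw [Real.volume_Ioc, sub_zero, ← ENNReal.ofReal_mul (hf_nonneg x)] at step
      exact (ENNReal.ofReal_le_iff_le_toReal hJ.ne).1 step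
    -- choose constants
    refine ⟨2 * t, by linarith, Real.exp (2 * Real.log (K + 1) + 2), ?_, ?_⟩
    · show (1:ℝ) < Real.exp (2 * Real.log (K + 1) + 2)
      have ha : (1:ℝ) < Real.exp 2 := by
        rw [show (1:ℝ) = Real.exp 0 by simp]
        exact Real.exp_lt_exp.2 (by norm_num)
      have hb : Real.exp 2 ≤ Real.exp (2 * Real.log (K + 1) + 2) := by
        apply Real.exp_le_exp.2
        nlinarith [Real.log_nonneg (by linarith : (1:ℝ) ≤ K + 1)]
      linarith
    · intro x hxge
      have hlogK : 0 ≤ Real.log (K + 1) := Real.log_nonneg (by linarith)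
      have hx2 : Real.exp 2 ≤ x := le_trans (Real.exp_le_exp.2 (by linarith)) hxge
      have h1e : (1:ℝ) < Real.exp 2 := by
        rw [show (1:ℝ) = Real.exp 0 by simp]
        exact Real.exp_lt_exp.2 (by norm_num)
      have hx1 : (1:ℝ) < x := lt_of_lt_of_le h1e hx2
      have hx0 : (0:ℝ) < x := by linarith
      have hlogx : 2 * Real.log (K + 1) + 2 ≤ Real.log x := by
        rw [← Real.log_exp (2 * Real.log (K + 1) + 2)]
        exact Real.log_le_log (Real.exp_pos _) hxge
      have hlogx2 : (2:ℝ) ≤ Real.log x := by linarith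
      have hlogxpos : 0 < Real.log x := by linarith
      by_cases h : μ x = 0
      · rw [h]; positivity
      · have hμpos : 0 < μ x := lt_of_le_of_ne (h_nonneg x hx0) (Ne.symm h)
        have hfx : f x = Real.exp (-t / μ x) := by simp [hf, h]
        have hfb : Real.exp (-t / μ x) ≤ (K + 1) / x := by
          rw [← hfx]
          rw [div_eq_mul_inv]
          have := hbound x hx0
          calc f x = f x * x * x⁻¹ := by field_simp
            _ ≤ (K + 1) * x⁻¹ := by
                apply mul_le_mul_of_nonneg_right (by linarith) (by positivity)
        have hlog2 : -t / μ x ≤ Real.log (K + 1) - Real.log x := by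
          rw [← Real.log_div (by linarith : K + 1 ≠ 0) hx0.ne']
          exact (Real.le_log_iff_exp_le (by positivity)).2 hfb
        have h4 : Real.log x / 2 ≤ t / μ x := by
          have : Real.log x - Real.log (K + 1) ≤ t / μ x := by
            have : -(t / μ x) ≤ Real.log (K + 1) - Real.log x := by
              rw [← neg_div]; exact hlog2
            linarith
          linarith
        -- μ x ≤ 2t / log x
        rw [div_le_div_iff₀ (by positivity : (0:ℝ) < 2) hμpos] at h4
        rw [le_div_iff₀ hlogxpos]
        nlinarith
end

section
/- Let H be a complex Hilbert space, let T be a bounded self-adjoint operator on H, and fix real numbers a > 0 with a·‖T‖² < 1, c ≥ 0, b > 0 and k > 0. Then for every λ on the contour σ — i.e., λ = −t + i with t ∈ (−∞,−a], or λ = a − ti with t ∈ [−1,1], or λ = t − i with t ∈ [a,∞) — the operator λ·T² − 1 is invertible, and the operator-valued function λ ↦ T² (λT² − 1)^{−1} λ^c exp(−bλ^k) is Bochner integrable along each of the three parametrized pieces of σ; in particular the integral of its operator norm over each piece is finite. -/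
open MeasureTheory Complex

/-- The integrand `λ ↦ T² (λT² - 1)⁻¹ λ^c exp (-b λ^k)` of the paper's Lemma C.2,
with principal-branch complex powers. -/
noncomputable def contourIntegrand {H : Type*} [NormedAddCommGroup H]
    [InnerProductSpace ℂ H] [CompleteSpace H]
    (T : H →L[ℂ] H) (c b k : ℝ) (l : ℂ) : H →L[ℂ] H :=
  (l ^ (c : ℂ) * Complex.exp (-(b : ℂ) * l ^ (k : ℂ))) •
    (T ^ 2 * Ring.inverse (l • T ^ 2 - 1))

open Filter
section Aux

variable {H : Type*} [NormedAddCommGroup H] [InnerProductSpace ℂ H] [CompleteSpace H]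

lemma statement17.L1 (T : H →L[ℂ] H) (hT : IsSelfAdjoint T) {l : ℂ}
    (h : l.im ≠ 0 ∨ ‖l‖ * ‖T‖ ^ 2 < 1) : IsUnit (l • T ^ 2 - 1) := by
  rcases h with h | h
  · have hl : l ≠ 0 := fun h0 => h (by simp [h0])
    have hμ : (l⁻¹) ∉ spectrum ℂ (T ^ 2) := by
      intro hmem
      have := (hT.pow 2).mem_spectrum_eq_re hmem
      have him : (l⁻¹).im = 0 := by rw [this]; simp
      rw [Complex.inv_im] at him
      have : l.im = 0 := by
        have hsq : Complex.normSq l ≠ 0 := by simpa [Complex.normSq_eq_zero] using hl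
        field_simp at him
        simpa using him
      exact h this
    have hu : IsUnit ((algebraMap ℂ (H →L[ℂ] H)) l⁻¹ - T ^ 2) := spectrum.notMem_iff.mp hμ
    have hu2 : IsUnit ((algebraMap ℂ (H →L[ℂ] H)) (-l)) :=
      (isUnit_iff_ne_zero.mpr (neg_ne_zero.mpr hl)).map (algebraMap ℂ (H →L[ℂ] H))
    have := hu2.mul hu
    have heq : (algebraMap ℂ (H →L[ℂ] H)) (-l) * ((algebraMap ℂ (H →L[ℂ] H)) l⁻¹ - T ^ 2)
        = l • T ^ 2 - 1 := by
      rw [mul_sub, ← map_mul, Algebra.smul_def]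
      rw [show (-l) * l⁻¹ = -1 by field_simp]
      simp [Algebra.algebraMap_eq_smul_one, neg_smul, sub_eq_add_neg, add_comm]
    rwa [heq] at this
  · have hnorm : ‖l • T ^ 2‖ < 1 := by
      calc ‖l • T ^ 2‖ = ‖l‖ * ‖T ^ 2‖ := by
            rw [norm_smul]
        _ ≤ ‖l‖ * ‖T‖ ^ 2 := by
            have : ‖T ^ 2‖ ≤ ‖T‖ ^ 2 := by
              calc ‖T ^ 2‖ = ‖T * T‖ := by rw [sq]
                _ ≤ ‖T‖ * ‖T‖ := norm_mul_le T T
                _ = ‖T‖ ^ 2 := (sq ‖T‖).symm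
            exact mul_le_mul_of_nonneg_left this (norm_nonneg l)
        _ < 1 := h
    have := (Units.oneSub (l • T ^ 2) hnorm).isUnit
    have h2 : l • T ^ 2 - 1 = -(1 - l • T ^ 2) := by abel
    rw [h2]
    exact this.neg

lemma statement17.Lreal {l : ℂ} (him : |l.im| = 1) {s r : ℝ} (hs : 0 ≤ s) (hr : 0 ≤ r) :
    r ≤ 2 * ‖l‖ * ‖l * s - r‖ := by
  have habs : 1 ≤ ‖l‖ := him ▸ Complex.abs_im_le_norm l
  by_cases hcase : r ≤ 2 * ‖l‖ * s
  · have h1 : |(l * (s : ℂ) - (r : ℂ)).im| ≤ ‖l * s - r‖ :=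
      Complex.abs_im_le_norm _
    have h2 : (l * (s : ℂ) - (r : ℂ)).im = l.im * s := by simp
    rw [h2, abs_mul, him, one_mul, _root_.abs_of_nonneg hs] at h1
    nlinarith [norm_nonneg (l * s - r)]
  · push_neg at hcase
    have h1 : ‖(r : ℂ)‖ - ‖l * (s : ℂ)‖ ≤ ‖(r : ℂ) - l * s‖ := norm_sub_norm_le _ _
    have h2 : ‖(r : ℂ) - l * s‖ = ‖l * s - r‖ := by
      rw [norm_sub_rev]
    have h3 : ‖(r : ℂ)‖ = r := by rw [Complex.norm_real]; exact _root_.abs_of_nonneg hr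
    have h4 : ‖l * (s : ℂ)‖ = ‖l‖ * s := by
      rw [norm_mul, Complex.norm_real, Real.norm_of_nonneg hs]
    rw [h2, h3, h4] at h1
    nlinarith

lemma statement17.L2 (T : H →L[ℂ] H) (hT : IsSelfAdjoint T) {l : ℂ} (him : |l.im| = 1)
    (x : H) : ‖x‖ ≤ 2 * ‖l‖ * ‖(l • T ^ 2 - 1 : H →L[ℂ] H) x‖ := by
  set A : H →L[ℂ] H := l • T ^ 2 - 1 with hA
  have key : (inner ℂ x (A x) : ℂ) = l * ((‖T x‖ ^ 2 : ℝ) : ℂ) - ((‖x‖ ^ 2 : ℝ) : ℂ) := by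
    have hAx : A x = l • (T ((T x))) - x := by
      simp [hA, ContinuousLinearMap.sub_apply, ContinuousLinearMap.smul_apply,
        ContinuousLinearMap.one_apply, sq, ContinuousLinearMap.mul_apply]
    rw [hAx, inner_sub_right, inner_smul_right]
    have h1 : (inner ℂ x (T (T x)) : ℂ) = inner ℂ (T x) (T x) := by
      have := ContinuousLinearMap.adjoint_inner_right T x (T x)
      rwa [hT.adjoint_eq] at this
    rw [h1, inner_self_eq_norm_sq_to_K, inner_self_eq_norm_sq_to_K]
    push_cast
    norm_num
    try rfl
  have hb : ‖l * ((‖T x‖ ^ 2 : ℝ) : ℂ) - ((‖x‖ ^ 2 : ℝ) : ℂ)‖ ≤ ‖x‖ * ‖A x‖ := by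
    rw [← key]
    exact norm_inner_le_norm x (A x)
  have hlow : ‖x‖ ^ 2 ≤ 2 * ‖l‖ *
      ‖l * ((‖T x‖ ^ 2 : ℝ) : ℂ) - ((‖x‖ ^ 2 : ℝ) : ℂ)‖ :=
    statement17.Lreal him (by positivity) (by positivity)
  have habs : 1 ≤ ‖l‖ := him ▸ Complex.abs_im_le_norm l
  rcases eq_or_lt_of_le (norm_nonneg x) with h0 | h0
  · rw [← h0]; positivity
  · have : ‖x‖ * ‖x‖ ≤ (2 * ‖l‖ * ‖A x‖) * ‖x‖ := by
      calc ‖x‖ * ‖x‖ = ‖x‖ ^ 2 := (sq ‖x‖).symm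
        _ ≤ 2 * ‖l‖ * (‖x‖ * ‖A x‖) := le_trans hlow (by nlinarith)
        _ = (2 * ‖l‖ * ‖A x‖) * ‖x‖ := by ring
    exact le_of_mul_le_mul_right this h0

lemma statement17.L3 {A : H →L[ℂ] H} (hu : IsUnit A) {C : ℝ} (hC : 0 ≤ C)
    (h : ∀ x, ‖x‖ ≤ C * ‖A x‖) : ‖(Ring.inverse A : H →L[ℂ] H)‖ ≤ C := by
  obtain ⟨u, rfl⟩ := hu
  rw [Ring.inverse_unit]
  refine ContinuousLinearMap.opNorm_le_bound _ hC fun y => ?_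
  have hy : (u : H →L[ℂ] H) ((↑u⁻¹ : H →L[ℂ] H) y) = y := by
    rw [← ContinuousLinearMap.mul_apply, u.mul_inv, ContinuousLinearMap.one_apply]
  calc ‖(↑u⁻¹ : H →L[ℂ] H) y‖ ≤ C * ‖(u : H →L[ℂ] H) ((↑u⁻¹ : H →L[ℂ] H) y)‖ := h _
    _ = C * ‖y‖ := by rw [hy]

lemma statement17.L4a {l : ℂ} (hl : l ≠ 0) (k : ℝ) :
    (l ^ (k : ℂ)).re = ‖l‖ ^ k * Real.cos (k * Complex.arg l) := by
  rw [Complex.cpow_def_of_ne_zero hl, Complex.exp_re]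
  have h1 : (Complex.log l * (k : ℂ)).re = Real.log (‖l‖) * k := by
    simp [Complex.log_re]
  have h2 : (Complex.log l * (k : ℂ)).im = Complex.arg l * k := by
    simp [Complex.log_im]
  rw [h1, h2, mul_comm (Complex.arg l) k]
  congr 1
  rw [Real.rpow_def_of_pos (norm_pos_iff.mpr hl)]

lemma statement17.L4 (T : H →L[ℂ] H) (c b k : ℝ) {l : ℂ} (hl : l ≠ 0) :
    ‖contourIntegrand T c b k l‖ ≤
      ‖l‖ ^ c * Real.exp (-b * (‖l‖ ^ k * Real.cos (k * Complex.arg l)))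
        * (‖T‖ ^ 2 * ‖(Ring.inverse (l • T ^ 2 - 1) : H →L[ℂ] H)‖) := by
  rw [contourIntegrand, norm_smul]
  have h1 : ‖l ^ (c : ℂ) * Complex.exp (-(b : ℂ) * l ^ (k : ℂ))‖
      = ‖l‖ ^ c *
        Real.exp (-b * (‖l‖ ^ k * Real.cos (k * Complex.arg l))) := by
    rw [norm_mul]
    congr 1
    · rw [Complex.norm_cpow_of_ne_zero hl]
      simp
    · rw [Complex.norm_exp]
      congr 1
      have : (-(b : ℂ) * l ^ (k : ℂ)).re = -b * (l ^ (k : ℂ)).re := by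
        simp [Complex.mul_re]
      rw [this, statement17.L4a hl k]
  rw [h1]
  have h2 : ‖T ^ 2 * (Ring.inverse (l • T ^ 2 - 1) : H →L[ℂ] H)‖
      ≤ ‖T‖ ^ 2 * ‖(Ring.inverse (l • T ^ 2 - 1) : H →L[ℂ] H)‖ := by
    calc ‖T ^ 2 * (Ring.inverse (l • T ^ 2 - 1) : H →L[ℂ] H)‖
        ≤ ‖T ^ 2‖ * ‖(Ring.inverse (l • T ^ 2 - 1) : H →L[ℂ] H)‖ := norm_mul_le _ _
      _ ≤ ‖T‖ ^ 2 * ‖(Ring.inverse (l • T ^ 2 - 1) : H →L[ℂ] H)‖ := by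
          have : ‖T ^ 2‖ ≤ ‖T‖ ^ 2 := by
            calc ‖T ^ 2‖ = ‖T * T‖ := by rw [sq]
              _ ≤ ‖T‖ * ‖T‖ := norm_mul_le T T
              _ = ‖T‖ ^ 2 := (sq ‖T‖).symm
          exact mul_le_mul_of_nonneg_right this (norm_nonneg _)
  exact mul_le_mul_of_nonneg_left h2 (by positivity)

lemma statement17.LCat (T : H →L[ℂ] H) (c b k : ℝ) {l : ℂ} (hsl : l ∈ Complex.slitPlane)
    (hu : IsUnit (l • T ^ 2 - 1)) :
    ContinuousAt (contourIntegrand T c b k) l := by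
  have h1 : ContinuousAt (fun z : ℂ => z ^ (c : ℂ)) l := continuousAt_cpow_const hsl
  have h2 : ContinuousAt (fun z : ℂ => Complex.exp (-(b : ℂ) * z ^ (k : ℂ))) l :=
    Complex.continuous_exp.continuousAt.comp
      (continuousAt_const.mul (continuousAt_cpow_const hsl))
  have h3 : ContinuousAt (fun z : ℂ => z • T ^ 2 - 1) l :=
    (continuousAt_id.smul continuousAt_const).sub continuousAt_const
  have h4 : ContinuousAt (fun z : ℂ => (Ring.inverse (z • T ^ 2 - 1) : H →L[ℂ] H)) l := by
    have hinv : ContinuousAt (Ring.inverse : (H →L[ℂ] H) → (H →L[ℂ] H))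
        ((fun z : ℂ => z • T ^ 2 - 1) l) := by
      show ContinuousAt _ (l • T ^ 2 - 1 : H →L[ℂ] H)
      have := NormedRing.inverse_continuousAt hu.unit
      rwa [hu.unit_spec] at this
    exact ContinuousAt.comp (f := fun z : ℂ => z • T ^ 2 - 1) (x := l) hinv h3
  exact (h1.mul h2).smul (continuousAt_const.mul h4)

lemma statement17.LCon (T : H →L[ℂ] H) (c b k : ℝ) {γ : ℝ → ℂ} {s : Set ℝ}
    (hγ : ContinuousOn γ s) (hsl : ∀ t ∈ s, γ t ∈ Complex.slitPlane)
    (hu : ∀ t ∈ s, IsUnit (γ t • T ^ 2 - 1)) :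
    ContinuousOn (fun t => contourIntegrand T c b k (γ t)) s := fun t ht =>
  (statement17.LCat T c b k (hsl t ht) (hu t ht)).comp_continuousWithinAt (hγ t ht)

lemma statement17.ClaimA {b k : ℝ} (hb : 0 < b) (hk : 0 < k) (m : ℝ) :
    Tendsto (fun t : ℝ => t ^ m * Real.exp (-(b / 2) * t ^ k)) atTop (nhds 0) := by
  have h1 := tendsto_rpow_mul_exp_neg_mul_atTop_nhds_zero (m / k) (b / 2) (by positivity)
  have h2 : Tendsto (fun t : ℝ => t ^ k) atTop atTop := tendsto_rpow_atTop hk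
  have h3 := h1.comp h2
  refine h3.congr' ?_
  filter_upwards [eventually_gt_atTop (0 : ℝ)] with t ht
  simp only [Function.comp_apply]
  rw [← Real.rpow_mul ht.le]
  rw [show k * (m / k) = m by field_simp]

lemma statement17.Lscalar : IntegrableAtFilter (fun t : ℝ => t ^ (-2 : ℝ)) atTop volume :=
  ⟨Set.Ioi 1, Ioi_mem_atTop 1, integrableOn_Ioi_rpow_of_lt (by norm_num) one_pos⟩

lemma statement17.Larcsin {r : ℝ} (hr : 2 ≤ r) : Real.arcsin (1 / r) ≤ 2 / r := by
  have hr0 : 0 < r := by linarith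
  have hio : 2 / r ∈ Set.Ico (-(Real.pi / 2)) (Real.pi / 2) := by
    constructor
    · have := Real.pi_pos
      have : 0 < 2 / r := by positivity
      linarith
    · have h1 : 2 / r ≤ 1 := by rw [div_le_one hr0]; linarith
      have := Real.pi_gt_three
      linarith
  rw [Real.arcsin_le_iff_le_sin' hio]
  have hx1 : 0 < 2 / r := by positivity
  have hx2 : 2 / r ≤ 1 := by rw [div_le_one hr0]; linarith
  have := Real.sin_gt_sub_cube hx1
  have key : 1 / r ≤ 2 / r - (2 / r) ^ 3 / 4 := by
    rw [div_pow]
    rw [show (2:ℝ)^3 = 8 by norm_num]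
    have h3 : (0:ℝ) < r ^ 3 := by positivity
    have e1 : (1:ℝ) / r = r ^ 2 / r ^ 3 := by field_simp
    have e2 : (2:ℝ) / r = 2 * r ^ 2 / r ^ 3 := by field_simp
    have e3 : (8:ℝ) / r ^ 3 / 4 = 2 / r ^ 3 := by ring
    rw [e1, e2, e3, div_sub_div_same, div_le_div_iff₀ h3 h3]
    nlinarith [mul_nonneg (show (0:ℝ) ≤ r^2 - 2 by nlinarith) h3.le]
  linarith [pow_pos hx1 3]

lemma statement17.Lpiece (T : H →L[ℂ] H) (hT : IsSelfAdjoint T) {a c b k : ℝ}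
    (ha : 0 < a) (hc : 0 ≤ c) (hb : 0 < b) (hk : 0 < k) {ε : ℝ} (hε : ε = 1 ∨ ε = -1) :
    IntegrableOn (fun t : ℝ => contourIntegrand T c b k ((t : ℂ) + (ε : ℂ) * Complex.I))
      (Set.Ici a) := by
  have hεabs : |ε| = 1 := by rcases hε with rfl | rfl <;> norm_num
  have hεne : ε ≠ 0 := by rcases hε with rfl | rfl <;> norm_num
  set γ : ℝ → ℂ := fun t => (t : ℂ) + (ε : ℂ) * Complex.I with hγdef
  have hγim : ∀ t, (γ t).im = ε := by intro t; simp [hγdef]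
  have hγre : ∀ t, (γ t).re = t := by intro t; simp [hγdef]
  have hunit : ∀ t : ℝ, IsUnit (γ t • T ^ 2 - 1) := fun t =>
    statement17.L1 T hT (Or.inl (by rw [hγim]; exact hεne))
  have hsl : ∀ t ∈ Set.Ici a, γ t ∈ Complex.slitPlane := fun t _ =>
    Complex.mem_slitPlane_iff.mpr (Or.inr (by rw [hγim]; exact hεne))
  haveI : SecondCountableTopologyEither ℝ (H →L[ℂ] H) := ⟨Or.inl inferInstance⟩
  have hcont : ContinuousOn (fun t => contourIntegrand T c b k (γ t)) (Set.Ici a) :=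
    statement17.LCon T c b k (Continuous.continuousOn (by continuity)) hsl
      (fun t _ => hunit t)
  refine (hcont.locallyIntegrableOn measurableSet_Ici).integrableOn_of_isBigO_atTop ?_
    statement17.Lscalar
  rw [Asymptotics.isBigO_iff]
  refine ⟨2 * ‖T‖ ^ 2 * (2 : ℝ) ^ (c + 1), ?_⟩
  have hA : ∀ᶠ t : ℝ in atTop, t ^ (c + 3) * Real.exp (-(b / 2) * t ^ k) < 1 :=
    (statement17.ClaimA hb hk (c + 3)).eventually_lt_const (by norm_num)
  filter_upwards [hA, eventually_ge_atTop (2 : ℝ), eventually_ge_atTop (4 * k),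
    eventually_ge_atTop (1 : ℝ)] with t h1t ht2 htk ht1
  have ht0 : (0:ℝ) < t := by linarith
  have hl0 : γ t ≠ 0 := fun h => hεne (by rw [← hγim t, h]; simp)
  have hrt : t ≤ ‖γ t‖ := by
    have h := Complex.abs_re_le_norm (γ t)
    rw [hγre] at h
    exact le_trans (le_abs_self t) h
  have hrub : ‖γ t‖ ≤ t + 1 := by
    have h := Complex.norm_le_abs_re_add_abs_im (γ t)
    rw [hγre, hγim, hεabs, _root_.abs_of_nonneg ht0.le] at h
    exact h
  have hr2 : 2 ≤ ‖γ t‖ := le_trans ht2 hrt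
  have hr0 : (0:ℝ) < ‖γ t‖ := by linarith
  have him1 : |(γ t).im| = 1 := by rw [hγim]; exact hεabs
  have hinv : ‖(Ring.inverse (γ t • T ^ 2 - 1) : H →L[ℂ] H)‖ ≤ 2 * ‖γ t‖ :=
    statement17.L3 (hunit t) (by positivity) (statement17.L2 T hT him1)
  -- arg bound
  have hargabs : |Complex.arg (γ t)| ≤ 2 / ‖γ t‖ := by
    have hre : 0 ≤ (γ t).re := by rw [hγre]; exact ht0.le
    rw [Complex.arg_of_re_nonneg hre, hγim]
    rcases hε with rfl | rfl
    · rw [_root_.abs_of_nonneg (Real.arcsin_nonneg.mpr (by positivity))]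
      exact statement17.Larcsin hr2
    · rw [show ((-1:ℝ) / ‖γ t‖) = -(1 / ‖γ t‖) by ring,
        Real.arcsin_neg, abs_neg,
        _root_.abs_of_nonneg (Real.arcsin_nonneg.mpr (by positivity))]
      exact statement17.Larcsin hr2
  have hcos : (1:ℝ)/2 ≤ Real.cos (k * Complex.arg (γ t)) := by
    have h1 : |k * Complex.arg (γ t)| ≤ 1/2 := by
      rw [abs_mul, _root_.abs_of_nonneg hk.le]
      calc k * |Complex.arg (γ t)| ≤ k * (2 / ‖γ t‖) :=
            mul_le_mul_of_nonneg_left hargabs hk.le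
        _ ≤ k * (2 / t) := by
            have : 2 / ‖γ t‖ ≤ 2 / t := by
              apply div_le_div_of_nonneg_left (by norm_num) ht0 hrt
            exact mul_le_mul_of_nonneg_left this hk.le
        _ ≤ 1/2 := by
            rw [mul_div_assoc'] at *
            rw [div_le_iff₀ ht0]
            linarith
    calc (1:ℝ)/2 ≤ 1 - |k * Complex.arg (γ t)| ^ 2 / 2 := by
          nlinarith [abs_nonneg (k * Complex.arg (γ t))]
      _ ≤ Real.cos |k * Complex.arg (γ t)| := Real.one_sub_sq_div_two_le_cos
      _ = Real.cos (k * Complex.arg (γ t)) := Real.cos_abs _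
  have hexp : Real.exp (-b * (‖γ t‖ ^ k * Real.cos (k * Complex.arg (γ t))))
      ≤ Real.exp (-(b/2) * t ^ k) := by
    rw [Real.exp_le_exp]
    have htk0 : (0:ℝ) ≤ t ^ k := Real.rpow_nonneg ht0.le k
    have hrk : t ^ k ≤ ‖γ t‖ ^ k := Real.rpow_le_rpow ht0.le hrt hk.le
    have hmm : t ^ k * (1/2) ≤ ‖γ t‖ ^ k * Real.cos (k * Complex.arg (γ t)) :=
      mul_le_mul hrk hcos (by norm_num) (Real.rpow_nonneg hr0.le k)
    nlinarith
  have hpowc : ‖γ t‖ ^ c ≤ (t+1) ^ c :=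
    Real.rpow_le_rpow (norm_nonneg _) hrub hc
  have hmain : ‖contourIntegrand T c b k (γ t)‖
      ≤ (t+1) ^ c * Real.exp (-(b/2) * t ^ k) * (‖T‖ ^ 2 * (2 * (t+1))) := by
    refine le_trans (statement17.L4 T c b k hl0) ?_
    have e0 : (0:ℝ) ≤ Real.exp (-b * (‖γ t‖ ^ k
        * Real.cos (k * Complex.arg (γ t)))) := Real.exp_nonneg _
    have hinv2 : ‖(Ring.inverse (γ t • T ^ 2 - 1) : H →L[ℂ] H)‖ ≤ 2 * (t + 1) := by
      linarith
    gcongr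
  refine le_trans hmain ?_
  -- now the pure real estimate
  have e1 : (t+1:ℝ) ^ (c+1) = (t+1) ^ c * (t+1) := Real.rpow_add_one (by positivity) c
  have e2 : (t+1:ℝ) ^ (c+1) ≤ (2*t) ^ (c+1) :=
    Real.rpow_le_rpow (by linarith) (by linarith) (by linarith)
  have e3 : ((2*t:ℝ)) ^ (c+1) = 2 ^ (c+1) * t ^ (c+1) := Real.mul_rpow (by norm_num) ht0.le
  have e4 : t ^ (c+1:ℝ) = t ^ (-2:ℝ) * t ^ (c+3) := by
    rw [show (c+1:ℝ) = -2 + (c+3) by ring, Real.rpow_add ht0]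
  have e5 : ‖t ^ (-2:ℝ)‖ = t ^ (-2:ℝ) :=
    _root_.abs_of_nonneg (Real.rpow_nonneg ht0.le _)
  have hexp0 : (0:ℝ) ≤ Real.exp (-(b/2) * t ^ k) := (Real.exp_pos _).le
  have htm2 : (0:ℝ) ≤ t ^ (-2:ℝ) := Real.rpow_nonneg ht0.le _
  have h2c : (0:ℝ) ≤ (2:ℝ) ^ (c+1) := Real.rpow_nonneg (by norm_num) _
  calc (t+1) ^ c * Real.exp (-(b/2) * t ^ k) * (‖T‖ ^ 2 * (2 * (t+1)))
      = 2 * ‖T‖ ^ 2 * ((t+1) ^ (c+1) * Real.exp (-(b/2) * t ^ k)) := by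
        rw [e1]; ring
    _ ≤ 2 * ‖T‖ ^ 2 * ((2*t) ^ (c+1) * Real.exp (-(b/2) * t ^ k)) := by
        have := mul_le_mul_of_nonneg_right e2 hexp0
        nlinarith [norm_nonneg T, sq_nonneg ‖T‖]
    _ = 2 * ‖T‖ ^ 2 * 2 ^ (c+1) * (t ^ (-2:ℝ) * (t ^ (c+3) * Real.exp (-(b/2) * t ^ k))) := by
        rw [e3, e4]; ring
    _ ≤ 2 * ‖T‖ ^ 2 * 2 ^ (c+1) * (t ^ (-2:ℝ) * 1) := by
        have h1 : (0:ℝ) ≤ 2 * ‖T‖ ^ 2 * 2 ^ (c+1) := by positivity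
        have h2 : t ^ (-2:ℝ) * (t ^ (c+3) * Real.exp (-(b/2) * t ^ k)) ≤ t ^ (-2:ℝ) * 1 :=
          mul_le_mul_of_nonneg_left h1t.le htm2
        exact mul_le_mul_of_nonneg_left h2 h1
    _ = 2 * ‖T‖ ^ 2 * (2:ℝ) ^ (c+1) * ‖t ^ (-2:ℝ)‖ := by rw [e5]; ring

lemma statement17.Lrefl {E : Type*} [NormedAddCommGroup E] {f : ℝ → E} {a : ℝ}
    (h : IntegrableOn f (Set.Ici a)) :
    IntegrableOn (fun t => f (-t)) (Set.Iic (-a)) := by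
  have h1 : Integrable ((Set.Ici a).indicator f) volume :=
    (integrable_indicator_iff measurableSet_Ici).mpr h
  have h2 := h1.comp_neg
  have h3 : (fun t => (Set.Ici a).indicator f (-t))
      = (Set.Iic (-a)).indicator (fun t => f (-t)) := by
    funext t
    simp only [Set.indicator_apply, Set.mem_Ici, Set.mem_Iic]
    exact if_congr ⟨fun h => by linarith, fun h => by linarith⟩ rfl rfl
  rw [h3] at h2
  exact (integrable_indicator_iff measurableSet_Iic).mp h2

end Aux

/-- Lemma C.2: for a bounded self-adjoint `T` on a complex Hilbert space,
`a > 0` with `a‖T‖² < 1`, `c ≥ 0`, `b > 0`, `k > 0`: for every `λ` on the contour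
`σ = σ₁ + σ₂ + σ₃` (with `σ₁ t = -t + i` for `t ≤ -a`, `σ₂ t = a - t i` for `t ∈ [-1,1]`,
`σ₃ t = t - i` for `t ≥ a`) the operator `λ T² - 1` is invertible, and
`λ ↦ T² (λT² - 1)⁻¹ λ^c exp (-bλ^k)` is Bochner integrable along each parametrized piece. -/
theorem statement17 {H : Type*} [NormedAddCommGroup H] [InnerProductSpace ℂ H]
    [CompleteSpace H] (T : H →L[ℂ] H) (hT : IsSelfAdjoint T) (a c b k : ℝ)
    (ha : 0 < a) (haT : a * ‖T‖ ^ 2 < 1) (hc : 0 ≤ c) (hb : 0 < b) (hk : 0 < k) :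
    (∀ t : ℝ, t ≤ -a → IsUnit (((-t : ℂ) + Complex.I) • T ^ 2 - 1)) ∧
    (∀ t : ℝ, t ∈ Set.Icc (-1 : ℝ) 1 →
      IsUnit (((a : ℂ) - (t : ℂ) * Complex.I) • T ^ 2 - 1)) ∧
    (∀ t : ℝ, a ≤ t → IsUnit (((t : ℂ) - Complex.I) • T ^ 2 - 1)) ∧
    IntegrableOn (fun t : ℝ => contourIntegrand T c b k ((-t : ℂ) + Complex.I))
      (Set.Iic (-a)) ∧
    IntegrableOn (fun t : ℝ => contourIntegrand T c b k ((a : ℂ) - (t : ℂ) * Complex.I))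
      (Set.Icc (-1 : ℝ) 1) ∧
    IntegrableOn (fun t : ℝ => contourIntegrand T c b k ((t : ℂ) - Complex.I))
      (Set.Ici a) := by
  have hu2 : ∀ t : ℝ, IsUnit (((a : ℂ) - (t : ℂ) * Complex.I) • T ^ 2 - 1) := by
    intro t
    rcases eq_or_ne t 0 with rfl | htne
    · refine statement17.L1 T hT (Or.inr ?_)
      simpa [_root_.abs_of_pos ha] using haT
    · refine statement17.L1 T hT (Or.inl ?_)
      simpa using htne
  refine ⟨?_, fun t _ => hu2 t, ?_, ?_, ?_, ?_⟩
  · intro t _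
    exact statement17.L1 T hT (Or.inl (by simp))
  · intro t _
    exact statement17.L1 T hT (Or.inl (by simp))
  · -- σ₁ integrability
    have h := statement17.Lpiece T hT ha hc hb hk (Or.inl rfl : (1:ℝ) = 1 ∨ (1:ℝ) = -1)
    have h2 := statement17.Lrefl h
    have h3 : (fun t : ℝ => contourIntegrand T c b k ((((-t : ℝ)) : ℂ) + ((1:ℝ) : ℂ) * Complex.I))
        = fun t : ℝ => contourIntegrand T c b k ((-t : ℂ) + Complex.I) := by
      funext t
      congr 1
      push_cast
      ring
    rwa [h3] at h2
  · -- σ₂ integrability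
    haveI : SecondCountableTopologyEither ℝ (H →L[ℂ] H) := ⟨Or.inl inferInstance⟩
    have hcont : ContinuousOn
        (fun t : ℝ => contourIntegrand T c b k ((a : ℂ) - (t : ℂ) * Complex.I))
        (Set.Icc (-1 : ℝ) 1) := by
      refine statement17.LCon T c b k (Continuous.continuousOn (by continuity)) ?_ ?_
      · intro t _
        exact Complex.mem_slitPlane_iff.mpr (Or.inl (by simpa using ha))
      · intro t _
        exact hu2 t
    exact hcont.integrableOn_compact isCompact_Icc
  · -- σ₃ integrability
    have h := statement17.Lpiece T hT ha hc hb hk (Or.inr rfl : (-1:ℝ) = 1 ∨ (-1:ℝ) = -1)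
    have h3 : (fun t : ℝ => contourIntegrand T c b k ((t : ℂ) + ((-1:ℝ) : ℂ) * Complex.I))
        = fun t : ℝ => contourIntegrand T c b k ((t : ℂ) - Complex.I) := by
      funext t
      congr 1
      push_cast
      ring
    rwa [h3] at h
end
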